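/- Either b = 0, or the spectrum of b b* in 𝒜 equals {0} ∪ {q^{2k} : k ∈ ℕ}. -/

import Mathlib

lemma suq2_aux_set (q : ℝ) (hq0 : 0 < q) (hq1 : q < 1) (T : Set ℝ)
    (hclosed : IsClosed T) (hsub : T ⊆ Set.Icc 0 1) (h1 : (1:ℝ) ∈ T)
    (hdown : ∀ t ∈ T, q ^ 2 * t ∈ T)
    (hup : ∀ t ∈ T, t ≠ 1 → ∃ s ∈ T, t = q ^ 2 * s) :
    T = {0} ∪ {t : ℝ | ∃ k : ℕ, t = q ^ (2 * k)} := by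
  have hq2pos : 0 < q ^ 2 := by positivity
  have hq2lt : q ^ 2 < 1 := by nlinarith
  have hpow : ∀ k : ℕ, q ^ (2 * k) ∈ T := by
    intro k
    induction k with
    | zero => simpa using h1
    | succ k ih =>
        have h : q ^ (2 * (k + 1)) = q ^ 2 * q ^ (2 * k) := by ring
        rw [h]; exact hdown _ ih
  have htend : Filter.Tendsto (fun k : ℕ => q ^ (2 * k)) Filter.atTop (nhds 0) := by
    have : (fun k : ℕ => q ^ (2 * k)) = fun k : ℕ => (q ^ 2) ^ k := by
      funext k; rw [pow_mul]
    rw [this]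
    exact tendsto_pow_atTop_nhds_zero_of_lt_one hq2pos.le hq2lt
  have h0 : (0:ℝ) ∈ T := hclosed.mem_of_tendsto htend (Filter.Eventually.of_forall hpow)
  have key : ∀ k : ℕ, ∀ t ∈ T, q ^ (2 * k) < t → ∃ j : ℕ, t = q ^ (2 * j) := by
    intro k
    induction k with
    | zero =>
        intro t ht hlt
        simp only [Nat.mul_zero, pow_zero] at hlt
        exact absurd (hsub ht).2 (not_le.mpr hlt)
    | succ k ih =>
        intro t ht hlt
        by_cases h1t : t = 1
        · exact ⟨0, by simpa using h1t⟩
        · obtain ⟨s, hs, rfl⟩ := hup t ht h1t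
          have hlt' : q ^ (2 * k) < s := by
            have h : q ^ (2 * (k + 1)) = q ^ 2 * q ^ (2 * k) := by ring
            rw [h] at hlt
            exact lt_of_mul_lt_mul_left hlt hq2pos.le
          obtain ⟨j, rfl⟩ := ih s hs hlt'
          exact ⟨j + 1, by ring⟩
  ext t
  simp only [Set.mem_union, Set.mem_singleton_iff, Set.mem_setOf_eq]
  constructor
  · intro ht
    rcases eq_or_lt_of_le (hsub ht).1 with h | h
    · exact Or.inl h.symm
    · obtain ⟨k, hk⟩ : ∃ k : ℕ, q ^ (2 * k) < t := by
        obtain ⟨k, hk⟩ := ((htend.eventually (gt_mem_nhds h)).exists)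
        exact ⟨k, hk⟩
      exact Or.inr (key k t ht hk)
  · rintro (rfl | ⟨k, rfl⟩)
    · exact h0
    · exact hpow k

open scoped Pointwise

/-- In a unital C*-algebra `𝒜` with elements `a, b` satisfying the defining
relations of `SU_q(2)` (for a fixed real `0 < q < 1`), either `b = 0` or the spectrum of
`b b*` equals `{0} ∪ {q^(2k) : k ∈ ℕ}`. -/
theorem spectrum_bbstar_SUq2
    {𝒜 : Type*} [NormedRing 𝒜] [StarRing 𝒜] [CStarRing 𝒜]
    [NormedAlgebra ℂ 𝒜] [CompleteSpace 𝒜] [StarModule ℂ 𝒜]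
    (q : ℝ) (hq0 : 0 < q) (hq1 : q < 1) (a b : 𝒜)
    (h1 : b * a = (q : ℂ) • (a * b))
    (h2 : star b * a = (q : ℂ) • (a * star b))
    (h3 : b * star b = star b * b)
    (h4 : star a * a + ((q : ℂ) ^ 2) • (star b * b) = 1)
    (h5 : a * star a + b * star b = 1) :
    b = 0 ∨ spectrum ℂ (b * star b)
      = ({0} : Set ℂ) ∪ {z : ℂ | ∃ k : ℕ, z = (q : ℂ) ^ (2 * k)} := by
  by_cases hb : b = 0
  · exact Or.inl hb
  · right

    letI : CStarAlgebra 𝒜 := ⟨⟩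
    set x : 𝒜 := b * star b with hxdef
    have hxsa : IsSelfAdjoint x := by
      rw [h3]; exact IsSelfAdjoint.star_mul_self b
    have hxa : a * star a = 1 - x := eq_sub_of_add_eq h5
    have hsmul : ((q : ℂ) ^ 2) • (star b * b) = (q ^ 2 : ℝ) • x := by
      rw [← h3, ← Complex.coe_smul]
      norm_cast
    have hxb : star a * a = 1 - (q ^ 2 : ℝ) • x := by
      rw [← hsmul]; exact eq_sub_of_add_eq h4
    haveI : Nontrivial 𝒜 := ⟨⟨b, 0, hb⟩⟩
    set T : Set ℝ := spectrum ℝ x with hTdef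
    have himg : (algebraMap ℝ ℂ) '' T = spectrum ℂ x :=
      hxsa.spectrumRestricts.algebraMap_image
    -- T nonneg
    have hT0 : ∀ t ∈ T, 0 ≤ t := by
      have := spectrum_star_mul_self_nonneg (b := star b) (A := 𝒜)
      rwa [star_star, ← hxdef] at this
    -- spectrum of 1 - x
    have hspec1 : spectrum ℝ (1 - x) = ({1} : Set ℝ) - T := by
      have := spectrum.singleton_sub_eq (R := ℝ) x 1
      rw [map_one] at this
      exact this.symm
    have hT1 : ∀ t ∈ T, t ≤ 1 := by
      intro t ht
      have hmem : (1 : ℝ) - t ∈ spectrum ℝ (1 - x) := by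
        rw [hspec1]
        exact Set.sub_mem_sub rfl ht
      rw [← hxa] at hmem
      have := spectrum_star_mul_self_nonneg (b := star a) (A := 𝒜)
      rw [star_star] at this
      linarith [this _ hmem]
    -- spectrum of 1 - q²x
    have hspec2 : spectrum ℝ (1 - (q ^ 2 : ℝ) • x) = ({1} : Set ℝ) - (q ^ 2 : ℝ) • T := by
      have h1' := spectrum.singleton_sub_eq (R := ℝ) ((q ^ 2 : ℝ) • x) 1
      rw [map_one] at h1'
      rw [← h1']
      congr 1
      have hu : spectrum ℝ ((Units.mk0 (q ^ 2 : ℝ) (by positivity)) • x)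
          = (Units.mk0 (q ^ 2 : ℝ) (by positivity)) • spectrum ℝ x :=
        spectrum.unit_smul_eq_smul x _
      simpa [Units.smul_def] using hu
    -- swap
    have hswap : ((({1} : Set ℝ) - T) \ {0}) = ((({1} : Set ℝ) - (q ^ 2 : ℝ) • T) \ {0}) := by
      have := spectrum.nonzero_mul_comm (𝕜 := ℝ) a (star a)
      rwa [hxa, hxb, hspec1, hspec2] at this
    -- q² T ⊆ T
    have hdown : ∀ t ∈ T, q ^ 2 * t ∈ T := by
      intro t ht
      have hmem : (1 : ℝ) - q ^ 2 * t ∈ ({1} : Set ℝ) - (q ^ 2 : ℝ) • T :=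
        Set.sub_mem_sub rfl ⟨t, ht, by simp [smul_eq_mul]⟩
      have hne : (1 : ℝ) - q ^ 2 * t ≠ 0 := by nlinarith [hT0 t ht, hT1 t ht]
      have hmem2 : (1 : ℝ) - q ^ 2 * t ∈ ((({1} : Set ℝ) - T) \ {0}) := by
        rw [hswap]; exact ⟨hmem, hne⟩
      obtain ⟨hmem3, -⟩ := hmem2
      rw [Set.mem_sub] at hmem3
      obtain ⟨u, hu, s, hs, hus⟩ := hmem3
      rw [Set.mem_singleton_iff] at hu
      subst hu
      have : s = q ^ 2 * t := by linarith
      rwa [← this]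
    -- T \ {1} ⊆ q² T
    have hup : ∀ t ∈ T, t ≠ 1 → ∃ s ∈ T, t = q ^ 2 * s := by
      intro t ht htne
      have hmem : (1 : ℝ) - t ∈ ((({1} : Set ℝ) - T) \ {0}) := by
        refine ⟨Set.sub_mem_sub rfl ht, ?_⟩
        simp only [Set.mem_singleton_iff, sub_eq_zero]
        exact fun h => htne h.symm
      rw [hswap] at hmem
      obtain ⟨hmem1, -⟩ := hmem
      rw [Set.mem_sub] at hmem1
      obtain ⟨u, hu, y, hy, huy⟩ := hmem1
      rw [Set.mem_singleton_iff] at hu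
      subst hu
      obtain ⟨s, hs, rfl⟩ := hy
      exact ⟨s, hs, by simp only [smul_eq_mul] at huy; linarith⟩
    -- T is closed, compact, nonempty
    have hTclosed : IsClosed T := spectrum.isClosed x
    have hTcpt : IsCompact T := spectrum.isCompact x
    have hTne : T.Nonempty := by
      have hS : (spectrum ℂ x).Nonempty := spectrum.nonempty x
      rw [← himg] at hS
      exact hS.of_image
    -- x ≠ 0
    have hxne : x ≠ 0 := by
      intro h
      apply hb
      have : ‖b‖ * ‖b‖ = 0 := by
        rw [← CStarRing.norm_self_mul_star (x := b), ← hxdef, h, norm_zero]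
      rw [← norm_eq_zero]
      nlinarith [norm_nonneg b]
    -- 1 ∈ T
    have hmax : (1 : ℝ) ∈ T := by
      set m := sSup T with hm
      have hmT : m ∈ T := hTcpt.sSup_mem hTne
      by_cases hm1 : m = 1
      · rwa [← hm1]
      · exfalso
        obtain ⟨s, hs, hms⟩ := hup m hmT hm1
        have hsle : s ≤ m := le_csSup hTcpt.bddAbove hs
        have hm0 : 0 ≤ m := hT0 m hmT
        have hq2lt : q ^ 2 < 1 := by nlinarith
        have hmul : q ^ 2 * s ≤ q ^ 2 * m :=
          mul_le_mul_of_nonneg_left hsle (by positivity)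
        have hmz : m = 0 := by nlinarith
        -- then T = {0}
        have hTsub : T ⊆ {0} := fun t ht => Set.mem_singleton_iff.mpr
          (le_antisymm ((le_csSup hTcpt.bddAbove ht).trans hmz.le) (hT0 t ht))
        have hTeq : T = {0} := Set.eq_of_subset_of_subset hTsub (by rintro t rfl; exact hmz ▸ hmT)
        -- spectrum ℂ x = {0}
        have hSeq : spectrum ℂ x = {0} := by
          rw [← himg, hTeq]
          simp
        have hrad : spectralRadius ℂ x = 0 := by
          rw [spectralRadius, hSeq]
          simp
        have := hxsa.spectralRadius_eq_nnnorm
        rw [hrad] at this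
        exact hxne (by simpa using this.symm)
    -- apply the set lemma
    have hTicc : T ⊆ Set.Icc 0 1 := fun t ht => ⟨hT0 t ht, hT1 t ht⟩
    have hTfinal := suq2_aux_set q hq0 hq1 T hTclosed hTicc hmax hdown hup
    -- conclude over ℂ
    have : spectrum ℂ x = ({0} : Set ℂ) ∪ {z : ℂ | ∃ k : ℕ, z = (q : ℂ) ^ (2 * k)} := by
      rw [← himg, hTfinal]
      ext z
      simp only [Set.mem_image, Set.mem_union, Set.mem_singleton_iff, Set.mem_setOf_eq,
        Complex.coe_algebraMap]
      constructor
      · rintro ⟨t, (rfl | ⟨k, rfl⟩), rfl⟩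
        · left; simp
        · right; exact ⟨k, by push_cast; ring_nf⟩
      · rintro (rfl | ⟨k, rfl⟩)
        · exact ⟨0, Or.inl rfl, by simp⟩
        · exact ⟨q ^ (2 * k), Or.inr ⟨k, rfl⟩, by push_cast; ring_nf⟩
    exact this
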